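/- Let f be a sigmoidal efficiency function with γ* the unique positive solution of f(γ) = γ f′(γ), and let c > 0. Then the (unconstrained) utility u(p) = f(cp)/p is strictly increasing in p for 0 < p < γ*/c and strictly decreasing for p > γ*/c; hence u attains its unique maximum over p > 0 at the power p* = γ*/c, i.e., at the power for which the output SIR equals γ*. -/

import Mathlib

/-- For a sigmoidal efficiency function `f` with `γ*` the unique positive
solution of `f γ = γ f' γ`, and `c > 0`, the utility `u(p) = f(c p)/p` is strictly
increasing on `(0, γ*/c)`, strictly decreasing on `(γ*/c, ∞)`, and attains its unique
maximum over `p > 0` at `p* = γ*/c` (the power achieving output SIR `γ*`). -/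
theorem utility_maximized_at_gamma_star (f f' f'' : ℝ → ℝ)
    (hcontf : ContinuousOn f (Set.Ici 0))
    (hderiv : ∀ x : ℝ, 0 < x → HasDerivAt f (f' x) x)
    (hcontf' : ContinuousOn f' (Set.Ioi 0))
    (hderiv2 : ∀ x : ℝ, 0 < x → HasDerivAt f' (f'' x) x)
    (hf0 : f 0 = 0)
    (hf'pos : ∀ x : ℝ, 0 < x → 0 < f' x)
    (hrange : ∀ x : ℝ, 0 ≤ x → 0 ≤ f x ∧ f x < 1)
    (hlim : Filter.Tendsto f Filter.atTop (nhds 1))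
    (a : ℝ) (ha : 0 < a)
    (hconvex : ∀ x : ℝ, 0 < x → x < a → 0 < f'' x)
    (hconcave : ∀ x : ℝ, a < x → f'' x < 0)
    (g : ℝ) (hg : 0 < g) (hgeq : f g = g * f' g)
    (hguniq : ∀ g' : ℝ, 0 < g' → f g' = g' * f' g' → g' = g)
    (c : ℝ) (hc : 0 < c) :
    StrictMonoOn (fun p : ℝ => f (c * p) / p) (Set.Ioo 0 (g / c)) ∧
    StrictAntiOn (fun p : ℝ => f (c * p) / p) (Set.Ioi (g / c)) ∧
    (∀ p : ℝ, 0 < p → p ≠ g / c → f (c * p) / p < f (c * (g / c)) / (g / c)) := by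
  set h : ℝ → ℝ := fun x => x * f' x - f x with hhdef
  have hhderiv : ∀ x : ℝ, 0 < x → HasDerivAt h (x * f'' x) x := by
    intro x hx
    have h1 : HasDerivAt (fun y : ℝ => y * f' y) (1 * f' x + x * f'' x) x :=
      (hasDerivAt_id x).mul (hderiv2 x hx)
    have h2 := h1.sub (hderiv x hx)
    refine h2.congr_deriv ?_
    ring
  -- h > 0 on (0, a]
  have hposA : ∀ x : ℝ, 0 < x → x ≤ a → 0 < h x := by
    intro x hx hxa
    obtain ⟨ξ, hξ, hslope⟩ := exists_hasDerivAt_eq_slope f f' hx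
      (hcontf.mono (by intro y hy; exact hy.1)) (fun y hy => hderiv y hy.1)
    have hslope' : f' ξ = f x / x := by
      rw [hslope, hf0]; ring_nf
    -- f' strictly increasing on Ioc 0 x
    have hmono : StrictMonoOn f' (Set.Ioc 0 x) := by
      apply strictMonoOn_of_deriv_pos (convex_Ioc 0 x)
        (hcontf'.mono (by intro y hy; exact hy.1))
      intro y hy
      rw [interior_Ioc] at hy
      rw [(hderiv2 y hy.1).deriv]
      exact hconvex y hy.1 (lt_of_lt_of_le hy.2 hxa)
    have hlt : f' ξ < f' x :=
      hmono ⟨hξ.1, hξ.2.le⟩ ⟨hx, le_refl x⟩ hξ.2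
    rw [hslope'] at hlt
    have : f x < x * f' x := by
      rw [div_lt_iff₀ hx] at hlt
      linarith [hlt]
    simp only [hhdef]
    linarith
  have hg0 : h g = 0 := by simp only [hhdef]; linarith [hgeq]
  have hag : a < g := by
    by_contra hle
    push_neg at hle
    have := hposA g hg hle
    linarith
  -- h strictly decreasing on Ici a
  have hanti : StrictAntiOn h (Set.Ici a) := by
    apply strictAntiOn_of_deriv_neg (convex_Ici a)
    · apply ContinuousOn.sub
      · exact continuousOn_id.mul (hcontf'.mono (fun y hy => lt_of_lt_of_le ha hy))
      · exact hcontf.mono (fun y hy => le_trans ha.le hy)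
    · intro y hy
      rw [interior_Ici] at hy
      rw [(hhderiv y (lt_trans ha hy)).deriv]
      exact mul_neg_of_pos_of_neg (lt_trans ha hy) (hconcave y hy)
  have hpos : ∀ x : ℝ, 0 < x → x < g → 0 < h x := by
    intro x hx hxg
    rcases le_or_gt x a with hxa | hax
    · exact hposA x hx hxa
    · have := hanti hax.le hag.le hxg
      linarith
  have hneg : ∀ x : ℝ, g < x → h x < 0 := by
    intro x hgx
    have := hanti hag.le (le_trans hag.le hgx.le) hgx
    linarith
  -- derivative of u
  have huderiv : ∀ p : ℝ, 0 < p →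
      HasDerivAt (fun q : ℝ => f (c * q) / q) (h (c * p) / p ^ 2) p := by
    intro p hp
    have hin : HasDerivAt (fun q : ℝ => c * q) c p := by
      simpa using (hasDerivAt_id p).const_mul c
    have h1 : HasDerivAt (fun q : ℝ => f (c * q)) (f' (c * p) * c) p :=
      (hderiv (c * p) (mul_pos hc hp)).comp p hin
    have h2 := h1.div (hasDerivAt_id p) hp.ne'
    refine h2.congr_deriv ?_
    simp only [hhdef, id_eq]
    field_simp
  have hucont : ∀ p : ℝ, 0 < p → ContinuousAt (fun q : ℝ => f (c * q) / q) p :=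
    fun p hp => (huderiv p hp).continuousAt
  have hgc : 0 < g / c := div_pos hg hc
  -- strict mono on Ioc 0 (g/c)
  have hmonoU : StrictMonoOn (fun p : ℝ => f (c * p) / p) (Set.Ioc 0 (g / c)) := by
    apply strictMonoOn_of_deriv_pos (convex_Ioc 0 (g / c))
      (fun p hp => (hucont p hp.1).continuousWithinAt)
    intro p hp
    rw [interior_Ioc] at hp
    rw [(huderiv p hp.1).deriv]
    apply div_pos
    · apply hpos (c * p) (mul_pos hc hp.1)
      calc c * p < c * (g / c) := by exact (mul_lt_mul_iff_right₀ hc).mpr hp.2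
        _ = g := by field_simp
    · exact pow_pos hp.1 2
  -- strict anti on Ici (g/c)
  have hantiU : StrictAntiOn (fun p : ℝ => f (c * p) / p) (Set.Ici (g / c)) := by
    apply strictAntiOn_of_deriv_neg (convex_Ici (g / c))
      (fun p hp => (hucont p (lt_of_lt_of_le hgc hp)).continuousWithinAt)
    intro p hp
    rw [interior_Ici] at hp
    rw [(huderiv p (lt_trans hgc hp)).deriv]
    apply div_neg_of_neg_of_pos
    · apply hneg (c * p)
      calc g = c * (g / c) := by field_simp
        _ < c * p := (mul_lt_mul_iff_right₀ hc).mpr hp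
    · exact pow_pos (lt_trans hgc hp) 2
  refine ⟨hmonoU.mono Set.Ioo_subset_Ioc_self, hantiU.mono Set.Ioi_subset_Ici_self, ?_⟩
  intro p hp hpne
  rcases lt_or_gt_of_ne hpne with hlt | hgt
  · exact hmonoU ⟨hp, hlt.le⟩ ⟨hgc, le_refl _⟩ hlt
  · exact hantiU (le_refl (g / c)) hgt.le hgt
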